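/- Let M be a binary matroid on a ground set E, X ⊆ E, e ∈ X, and A ⊆ E. Suppose C is an OX-circuit of M and C' is an EX-circuit of M such that e ∈ C ⊆ A ∪ {e} and e ∈ C' ⊆ A ∪ {e}. Then M has an OX-circuit C'' with C'' ⊆ A. -/

import Mathlib

open Set

namespace ESSplit

variable {α : Type*}

/-- A circuit of a matroid: a minimal dependent set. -/
def IsCircuit (M : Matroid α) (C : Set α) : Prop :=
  M.Dep C ∧ ∀ D, D ⊂ C → M.Indep D

/-- A binary matroid: one representable over GF(2). -/
def IsBinary (M : Matroid α) : Prop :=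
  ∃ (n : ℕ) (φ : α → (Fin n → ZMod 2)),
    ∀ I, I ⊆ M.E → (M.Indep I ↔ LinearIndependent (ZMod 2) (fun x : I => φ x.1))

/-- An OX-circuit: a circuit meeting `X` in an odd number of elements. -/
def IsOX (M : Matroid α) (X C : Set α) : Prop :=
  IsCircuit M C ∧ Odd (C ∩ X).ncard

/-- An EX-circuit: a circuit meeting `X` in an even number of elements. -/
def IsEX (M : Matroid α) (X C : Set α) : Prop :=
  IsCircuit M C ∧ Even (C ∩ X).ncard

/-- `D` is a union of two disjoint OX-circuits containing no EX-circuit. -/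
def OXUnion (M : Matroid α) (X D : Set α) : Prop :=
  ∃ C₁ C₂, IsOX M X C₁ ∧ IsOX M X C₂ ∧ Disjoint C₁ C₂ ∧ D = C₁ ∪ C₂ ∧
    ¬ ∃ C₀, IsEX M X C₀ ∧ C₀ ⊆ D

/-- The description of the circuits of the es-splitting matroid `M_X^e`. -/
def ESCircuit (M : Matroid α) (X : Set α) (e a γ : α) (C : Set α) : Prop :=
  C = {e, a, γ} ∨
  IsEX M X C ∨
  (OXUnion M X C ∧ ∀ D, OXUnion M X D → D ⊆ C → D = C) ∨
  (∃ C₀, IsOX M X C₀ ∧ C = C₀ ∪ {a}) ∨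
  (∃ C₀, IsOX M X C₀ ∧ e ∉ C₀ ∧ C = C₀ ∪ {e, γ}) ∨
  (∃ C₀, IsOX M X C₀ ∧ e ∈ C₀ ∧ C = (C₀ \ {e}) ∪ {γ}) ∨
  (∃ C₀, IsCircuit M C₀ ∧ e ∈ C₀ ∧ Odd (((C₀ \ {e}) ∩ X).ncard) ∧
      C = (C₀ \ {e}) ∪ {a, γ})

/-- `M'` is the es-splitting matroid `M_X^e` of `M` (with new elements `a`, `γ`):
it has ground set `M.E ∪ {a, γ}` and its circuits are exactly as described. -/
def IsESSplit (M M' : Matroid α) (X : Set α) (e a γ : α) : Prop :=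
  M'.E = M.E ∪ {a, γ} ∧ ∀ C, IsCircuit M' C ↔ ESCircuit M X e a γ C

/-- The set `T(A)`. -/
def T (M : Matroid α) (X : Set α) (e : α) (A : Set α) : Set α :=
  {x | x ∈ M.E \ A ∧ x ≠ e ∧ ∃ C, IsOX M X C ∧ x ∈ C ∧ e ∈ C ∧ C ⊆ A ∪ {e, x}}

/-- The set `F(A)`. -/
def F (M : Matroid α) (X A : Set α) : Set α :=
  {x | x ∈ M.closure A \ A ∧ ∃ C, IsOX M X C ∧ x ∈ C ∧ C ⊆ M.closure A}

/-- The rank of a set `A` in a (finite) matroid: the maximum size of an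
independent subset of `A`. -/
noncomputable def rk (M : Matroid α) (A : Set α) : ℕ :=
  sSup {n | ∃ I, M.Indep I ∧ I ⊆ A ∧ I.ncard = n}

private lemma zmod2_one : ∀ {a : ZMod 2}, a ≠ 0 → a = 1 := by decide

lemma circuit_sum {M : Matroid α} {n : ℕ} {φ : α → Fin n → ZMod 2}
    (hφ : ∀ I, I ⊆ M.E → (M.Indep I ↔ LinearIndependent (ZMod 2) (fun x : I => φ x.1)))
    {C : Set α} (hC : IsCircuit M C) (hCfin : C.Finite) :
    ∑ x ∈ hCfin.toFinset, φ x = 0 := by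
  have hCE : C ⊆ M.E := hC.1.subset_ground
  have hdep : ¬ LinearIndependent (ZMod 2) (φ ∘ (↑) : C → _) :=
    fun h => hC.1.not_indep ((hφ C hCE).mpr h)
  obtain ⟨l, hl₁, hl₂, hl₃⟩ := linearDepOn_iff'.mp hdep
  have hsupC : (↑l.support : Set α) = C := by
    by_contra hne
    have hss : (↑l.support : Set α) ⊂ C :=
      ((Finsupp.mem_supported _ l).mp hl₁).ssubset_of_ne hne
    have hind : LinearIndependent (ZMod 2) (φ ∘ (↑) : (↑l.support : Set α) → _) :=
      (hφ _ (hss.subset.trans hCE)).mp (hC.2 _ hss)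
    exact hl₃ (linearIndepOn_iff.mp hind l
      ((Finsupp.mem_supported _ l).mpr subset_rfl) hl₂)
  have hfs : l.support = hCfin.toFinset := by
    apply Finset.coe_injective
    rw [hsupC, Set.Finite.coe_toFinset]
  rw [← hfs, ← hl₂, Finsupp.linearCombination_apply, Finsupp.sum]
  exact Finset.sum_congr rfl fun x hx => by
    rw [zmod2_one (Finsupp.mem_support_iff.mp hx), one_smul]

lemma dep_of_sum_zero {M : Matroid α} {n : ℕ} {φ : α → Fin n → ZMod 2}
    (hφ : ∀ I, I ⊆ M.E → (M.Indep I ↔ LinearIndependent (ZMod 2) (fun x : I => φ x.1)))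
    {D : Set α} (hDE : D ⊆ M.E) (hDfin : D.Finite) (hne : D.Nonempty)
    (hsum : ∑ x ∈ hDfin.toFinset, φ x = 0) : M.Dep D := by
  refine ⟨fun hind => ?_, hDE⟩
  have hli := (hφ D hDE).mp hind
  haveI := hDfin.fintype
  rw [Fintype.linearIndependent_iff] at hli
  have hsub : ∑ i : D, φ i.1 = 0 := by
    rw [← Finset.sum_subtype hDfin.toFinset (fun x => hDfin.mem_toFinset) φ]
    exact hsum
  obtain ⟨x, hx⟩ := hne
  have := hli (fun _ => 1) (by simpa using hsub) ⟨x, hx⟩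
  simp at this


lemma exists_circuit_of_dep {M : Matroid α} (hfin : M.E.Finite) {D : Set α} (hD : M.Dep D) :
    ∃ C, IsCircuit M C ∧ C ⊆ D := by
  obtain ⟨m, hm⟩ : ∃ m, D.ncard = m := ⟨_, rfl⟩
  induction m using Nat.strong_induction_on generalizing D with
  | _ m ih =>
    by_cases h : ∀ D', D' ⊂ D → M.Indep D'
    · exact ⟨D, ⟨hD, h⟩, subset_rfl⟩
    · push_neg at h
      obtain ⟨D', hss, hdep⟩ := h
      have hD' : M.Dep D' := ⟨hdep, hss.subset.trans hD.subset_ground⟩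
      obtain ⟨C, hC, hCsub⟩ := ih D'.ncard
        (hm ▸ Set.ncard_lt_ncard hss (hfin.subset hD.subset_ground)) hD' rfl
      exact ⟨C, hC, hCsub.trans hss.subset⟩

lemma key {M : Matroid α} (hfin : M.E.Finite) {n : ℕ} {φ : α → Fin n → ZMod 2}
    (hφ : ∀ I, I ⊆ M.E → (M.Indep I ↔ LinearIndependent (ZMod 2) (fun x : I => φ x.1)))
    (X : Set α) :
    ∀ m : ℕ, ∀ D : Set α, D ⊆ M.E → D.ncard = m →
      ∀ (hDfin : D.Finite), (∑ x ∈ hDfin.toFinset, φ x = 0) → Odd ((D ∩ X).ncard) →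
      ∃ C'', IsOX M X C'' ∧ C'' ⊆ D := by
  intro m
  induction m using Nat.strong_induction_on with
  | _ m ih =>
    intro D hDE hm hDfin hsum hodd
    have hne : D.Nonempty := by
      have h1 : (D ∩ X).Nonempty := Set.nonempty_of_ncard_ne_zero
        (by intro h0; rw [h0] at hodd; simp at hodd)
      obtain ⟨x, hx⟩ := h1
      exact ⟨x, hx.1⟩
    have hdep : M.Dep D := dep_of_sum_zero hφ hDE hDfin hne hsum
    obtain ⟨C₁, hC₁, hC₁D⟩ := exists_circuit_of_dep hfin hdep
    have hC₁fin : C₁.Finite := hDfin.subset hC₁D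
    have hC₁sum : ∑ x ∈ hC₁fin.toFinset, φ x = 0 := circuit_sum hφ hC₁ hC₁fin
    classical
    rcases (Nat.even_or_odd ((C₁ ∩ X).ncard)).symm with hoddC | hevenC
    · exact ⟨C₁, ⟨hC₁, hoddC⟩, hC₁D⟩
    · set D₂ := D \ C₁ with hD₂def
      have hD₂fin : D₂.Finite := hDfin.diff
      have hC₁ne : C₁.Nonempty := by
        rw [Set.nonempty_iff_ne_empty]
        rintro rfl
        exact hC₁.1.not_indep M.empty_indep
      have hss : D₂ ⊂ D := by
        refine ⟨Set.diff_subset, fun hsub => ?_⟩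
        obtain ⟨x, hx⟩ := hC₁ne
        exact (hsub (hC₁D hx)).2 hx
      -- finset facts
      have htf : hD₂fin.toFinset = hDfin.toFinset \ hC₁fin.toFinset := by
        ext x; simp [hD₂def]
      have hsub' : hC₁fin.toFinset ⊆ hDfin.toFinset := by
        intro x hx; simp only [Set.Finite.mem_toFinset] at *; exact hC₁D hx
      have hsum₂ : ∑ x ∈ hD₂fin.toFinset, φ x = 0 := by
        have := Finset.sum_sdiff (f := φ) hsub'
        rw [htf]
        have h2 : ∑ x ∈ hDfin.toFinset \ hC₁fin.toFinset, φ x + ∑ x ∈ hC₁fin.toFinset, φ x = 0 := by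
          rw [this, hsum]
        rw [hC₁sum, add_zero] at h2
        exact h2
      have hpar : Odd ((D₂ ∩ X).ncard) := by
        have hunion : (D₂ ∩ X) ∪ (C₁ ∩ X) = D ∩ X := by
          rw [← Set.union_inter_distrib_right, hD₂def, Set.diff_union_of_subset hC₁D]
        have hdisj : Disjoint (D₂ ∩ X) (C₁ ∩ X) :=
          Set.disjoint_of_subset (Set.inter_subset_left) (Set.inter_subset_left)
            (Set.disjoint_sdiff_left)
        have hcard : (D₂ ∩ X).ncard + (C₁ ∩ X).ncard = (D ∩ X).ncard := by
          rw [← hunion, Set.ncard_union_eq hdisj (hD₂fin.inter_of_left _)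
            (hC₁fin.inter_of_left _)]
        rw [Nat.odd_iff] at hodd ⊢
        rw [Nat.even_iff] at hevenC
        omega
      obtain ⟨C'', h1, h2⟩ := ih D₂.ncard (hm ▸ Set.ncard_lt_ncard hss hDfin) D₂
        (Set.diff_subset.trans hDE) rfl hD₂fin hsum₂ hpar
      exact ⟨C'', h1, h2.trans Set.diff_subset⟩

end ESSplit

open ESSplit

theorem exists_OX_circuit_in_A
    {α : Type*} (M : Matroid α) (X : Set α) (e : α) (A : Set α)
    (hfin : M.E.Finite) (hbin : IsBinary M)
    (hXE : X ⊆ M.E) (heX : e ∈ X) (hAE : A ⊆ M.E)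
    (C C' : Set α)
    (hC : IsOX M X C) (hC' : IsEX M X C')
    (heC : e ∈ C) (hCsub : C ⊆ A ∪ {e})
    (heC' : e ∈ C') (hC'sub : C' ⊆ A ∪ {e}) :
    ∃ C'', IsOX M X C'' ∧ C'' ⊆ A := by
  classical
  obtain ⟨n, φ, hφ⟩ := hbin
  obtain ⟨hCcirc, hCodd⟩ := hC
  obtain ⟨hC'circ, hC'even⟩ := hC'
  have hCE : C ⊆ M.E := hCcirc.1.subset_ground
  have hC'E : C' ⊆ M.E := hC'circ.1.subset_ground
  have hCfin : C.Finite := hfin.subset hCE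
  have hC'fin : C'.Finite := hfin.subset hC'E
  set D := (C \ C') ∪ (C' \ C) with hDdef
  have hDfin : D.Finite := hCfin.diff.union hC'fin.diff
  have hDA : D ⊆ A := by
    rintro x (⟨hx1, hx2⟩ | ⟨hx1, hx2⟩)
    · rcases hCsub hx1 with h | h
      · exact h
      · exact absurd ((Set.mem_singleton_iff.mp h) ▸ heC') hx2
    · rcases hC'sub hx1 with h | h
      · exact h
      · exact absurd ((Set.mem_singleton_iff.mp h) ▸ heC) hx2
  set s := hCfin.toFinset with hs
  set t := hC'fin.toFinset with ht
  have hvv : ∀ v : Fin n → ZMod 2, v + v = 0 := by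
    intro v; funext i
    simp only [Pi.add_apply, Pi.zero_apply]
    generalize v i = a; revert a; decide
  have hDt : hDfin.toFinset = (s \ t) ∪ (t \ s) := by
    ext x; simp [hDdef, hs, ht]
  have hDsum : ∑ x ∈ hDfin.toFinset, φ x = 0 := by
    rw [hDt, Finset.sum_union disjoint_sdiff_sdiff]
    have e1 : ∑ x ∈ s \ t, φ x + ∑ x ∈ s ∩ t, φ x = 0 := by
      rw [← Finset.sdiff_inter_self_left s t, Finset.sum_sdiff Finset.inter_subset_left]
      exact circuit_sum hφ hCcirc hCfin
    have e2 : ∑ x ∈ t \ s, φ x + ∑ x ∈ t ∩ s, φ x = 0 := by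
      rw [← Finset.sdiff_inter_self_left t s, Finset.sum_sdiff Finset.inter_subset_left]
      exact circuit_sum hφ hC'circ hC'fin
    have e3 : ∑ x ∈ s ∩ t, φ x = ∑ x ∈ t ∩ s, φ x := by rw [Finset.inter_comm]
    have e4 := hvv (∑ x ∈ s ∩ t, φ x)
    linear_combination e1 + e2 - e4 + e3
  have hDX : D ∩ X = ((C ∩ X) \ (C' ∩ X)) ∪ ((C' ∩ X) \ (C ∩ X)) := by
    ext x
    simp only [hDdef, Set.mem_inter_iff, Set.mem_union, Set.mem_diff]
    tauto
  have hd1 : ((C ∩ X) ∩ (C' ∩ X)).ncard + ((C ∩ X) \ (C' ∩ X)).ncard = (C ∩ X).ncard :=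
    Set.ncard_inter_add_ncard_diff_eq_ncard _ _ (hCfin.inter_of_left _)
  have hd2 : ((C' ∩ X) ∩ (C ∩ X)).ncard + ((C' ∩ X) \ (C ∩ X)).ncard = (C' ∩ X).ncard :=
    Set.ncard_inter_add_ncard_diff_eq_ncard _ _ (hC'fin.inter_of_left _)
  have hd3 : ((C' ∩ X) ∩ (C ∩ X)).ncard = ((C ∩ X) ∩ (C' ∩ X)).ncard := by
    rw [Set.inter_comm]
  have hdu : (D ∩ X).ncard
      = ((C ∩ X) \ (C' ∩ X)).ncard + ((C' ∩ X) \ (C ∩ X)).ncard := by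
    rw [hDX, Set.ncard_union_eq disjoint_sdiff_sdiff
      ((hCfin.inter_of_left _).diff) ((hC'fin.inter_of_left _).diff)]
  have hoddD : Odd ((D ∩ X).ncard) := by
    rw [Nat.odd_iff] at hCodd ⊢
    rw [Nat.even_iff] at hC'even
    omega
  obtain ⟨C'', hOX, hsub⟩ := key hfin hφ X D.ncard D (hDA.trans hAE) rfl hDfin hDsum hoddD
  exact ⟨C'', hOX, hsub.trans hDA⟩
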